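/- Let (Φ_k)_{k≥1} be biholomorphic maps Φ_k(z,ζ) = (z, φ_k(z,ζ)) of U_k × ℂⁿ with Φ_k(z,0) = (z,0), where U_k are decreasing neighbourhoods of a compact set L ⊆ ℂᴺ, B ⊆ ℂⁿ a closed ball centred at 0, and Φᵏ = Φ_k ∘ ⋯ ∘ Φ₁. If each Φ_k approximates the identity sufficiently closely on L × kB, then the limit Φ = lim Φᵏ exists uniformly on compact subsets of Ω = ⋃_k (Φᵏ)⁻¹(L × kB), and for each z ∈ L the map Φ(z, ·) sends the fibre Ω_z = {ζ : (z,ζ) ∈ Ω} biholomorphically onto ℂⁿ. -/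

import Mathlib

noncomputable section
open Set Metric MvPolynomial

/-- The polynomially convex hull of a set in `ℂⁿ`. -/
def polyHull {n : ℕ} (K : Set (EuclideanSpace ℂ (Fin n))) : Set (EuclideanSpace ℂ (Fin n)) :=
  {z | ∀ p : MvPolynomial (Fin n) ℂ,
    ‖eval (fun i => z i) p‖ ≤ sSup ((fun w => ‖eval (fun i => w i) p‖) '' K)}

/-- A compact set in `ℂⁿ` is polynomially convex if it equals its polynomial hull. -/
def IsPolyConvex {n : ℕ} (K : Set (EuclideanSpace ℂ (Fin n))) : Prop :=
  polyHull K = K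

/-- Polynomial hull for subsets of a product `ℂᴺ × ℂⁿ ≅ ℂ^{N+n}`, using polynomials in the
`N + n` coordinates. -/
def polyHull2 {N n : ℕ} (S : Set (EuclideanSpace ℂ (Fin N) × EuclideanSpace ℂ (Fin n))) :
    Set (EuclideanSpace ℂ (Fin N) × EuclideanSpace ℂ (Fin n)) :=
  {z | ∀ p : MvPolynomial (Fin N ⊕ Fin n) ℂ,
    ‖eval (Sum.elim (fun i => z.1 i) (fun j => z.2 j)) p‖ ≤
      sSup ((fun w => ‖eval (Sum.elim (fun i => w.1 i) (fun j => w.2 j)) p‖) '' S)}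

def IsPolyConvex2 {N n : ℕ} (S : Set (EuclideanSpace ℂ (Fin N) × EuclideanSpace ℂ (Fin n))) :
    Prop :=
  polyHull2 S = S

lemma schwarz_lip' {F : Type*} [NormedAddCommGroup F] [NormedSpace ℂ F]
    (h : F → F) (hd : Differentiable ℂ h) {R r ε : ℝ} (hr : 0 < r) (hε : 0 < ε)
    (hb : ∀ u : F, ‖u‖ ≤ R + r → ‖h u‖ ≤ ε)
    {a b : F} (ha : ‖a‖ ≤ R) (hbb : ‖b‖ ≤ R) :
    dist (h a) (h b) ≤ 3 * ε / r * dist a b := by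
  have hR : 0 ≤ R := le_trans (norm_nonneg a) ha
  rcases le_or_gt r (dist a b) with hcase | hcase
  · have h1 : ‖h a‖ ≤ ε := hb a (by linarith)
    have h2 : ‖h b‖ ≤ ε := hb b (by linarith)
    calc dist (h a) (h b) ≤ ‖h a‖ + ‖h b‖ := dist_le_norm_add_norm _ _
      _ ≤ 2 * ε := by linarith
      _ = 2 * ε / r * r := by field_simp
      _ ≤ 3 * ε / r * dist a b := by
          apply mul_le_mul _ hcase (le_of_lt hr) (by positivity)
          gcongr <;> linarith
  · rcases eq_or_ne a b with rfl | hne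
    · simp
    have hd0 : 0 < dist a b := dist_pos.mpr hne
    set f : ℂ → F := fun t => h (a + t • (b - a)) with hf
    have hfd : Differentiable ℂ f := by
      apply hd.comp
      exact (differentiable_id.smul_const (b - a)).const_add a
    have hmaps : MapsTo f (ball (0:ℂ) (r / dist a b)) (ball (f 0) (3 * ε)) := by
      intro t ht
      simp only [mem_ball, dist_zero_right] at ht
      have hpt : ‖a + t • (b - a)‖ ≤ R + r := by
        have : ‖t • (b - a)‖ ≤ r := by
          rw [norm_smul]
          have hba : ‖b - a‖ = dist a b := by rw [dist_comm, dist_eq_norm]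
          rw [hba]
          calc ‖t‖ * dist a b ≤ (r / dist a b) * dist a b := by
                apply mul_le_mul_of_nonneg_right (le_of_lt ht) (le_of_lt hd0)
            _ = r := by field_simp
        calc ‖a + t • (b - a)‖ ≤ ‖a‖ + ‖t • (b - a)‖ := norm_add_le _ _
          _ ≤ R + r := by linarith
      have hf0 : f 0 = h a := by simp [hf]
      have := hb _ hpt
      simp only [mem_ball]
      calc dist (f t) (f 0) ≤ ‖f t‖ + ‖f 0‖ := dist_le_norm_add_norm _ _
        _ ≤ ε + ε := by
            refine add_le_add this ?_
            rw [hf0]; exact hb a (by linarith)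
        _ < 3 * ε := by linarith
    have h1 : (1 : ℂ) ∈ ball (0:ℂ) (r / dist a b) := by
      simp only [mem_ball, dist_zero_right, norm_one]
      rw [lt_div_iff₀ hd0]
      linarith
    have := Complex.dist_le_div_mul_dist_of_mapsTo_ball hfd.differentiableOn (hmaps.mono_right ball_subset_closedBall) h1
    have hf1 : f 1 = h b := by simp [hf]
    have hf0 : f 0 = h a := by simp [hf]
    rw [hf1, hf0] at this
    have hdist1 : dist (1:ℂ) 0 = 1 := by simp
    rw [hdist1, mul_one] at this
    calc dist (h a) (h b) = dist (h b) (h a) := dist_comm _ _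
      _ ≤ 3 * ε / (r / dist a b) := this
      _ = 3 * ε / r * dist a b := by field_simp

lemma near_id_fixed' {F : Type*} [NormedAddCommGroup F] [NormedSpace ℂ F] [CompleteSpace F]
    (h : F → F) {R ε : ℝ} (hR : 0 ≤ R)
    (hlip : ∀ a b : F, ‖a‖ ≤ R → ‖b‖ ≤ R → dist (h a) (h b) ≤ 2⁻¹ * dist a b)
    (hb : ∀ u : F, ‖u‖ ≤ R → ‖h u‖ ≤ ε)
    {w : F} (hw : ‖w‖ + ε ≤ R) :
    ∃ u : F, ‖u‖ ≤ R ∧ u + h u = w := by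
  have hε : 0 ≤ ε := le_trans (norm_nonneg _) (hb 0 (by simpa using hR))
  set T : F → F := fun u => w - h u with hT
  have hmaps : MapsTo T (closedBall (0:F) R) (closedBall (0:F) R) := by
    intro u hu
    rw [mem_closedBall_zero_iff] at hu ⊢
    calc ‖w - h u‖ ≤ ‖w‖ + ‖h u‖ := norm_sub_le _ _
      _ ≤ ‖w‖ + ε := by linarith [hb u hu]
      _ ≤ R := hw
  have hcontr : ContractingWith (1/2 : NNReal) (hmaps.restrict T _ _) := by
    constructor
    · rw [← NNReal.coe_lt_coe]; norm_num
    · apply LipschitzWith.of_dist_le_mul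
      rintro ⟨u, hu⟩ ⟨v, hv⟩
      have hu' := mem_closedBall_zero_iff.mp hu
      have hv' := mem_closedBall_zero_iff.mp hv
      have h1 : dist (hmaps.restrict T _ _ ⟨u, hu⟩) (hmaps.restrict T _ _ ⟨v, hv⟩)
          = dist (T u) (T v) := rfl
      have h2 : dist ((⟨u, hu⟩ : closedBall (0:F) R)) ⟨v, hv⟩ = dist u v := rfl
      rw [h1, h2]
      have h3 : dist (T u) (T v) = dist (h u) (h v) := by
        simp only [hT, dist_sub_left]
      rw [h3]
      calc dist (h u) (h v) ≤ 2⁻¹ * dist u v := hlip u v hu' hv'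
        _ = ((1/2 : NNReal) : ℝ) * dist u v := by norm_num
  obtain ⟨y, hy, hfix, -⟩ := ContractingWith.exists_fixedPoint'
    (Metric.isClosed_closedBall.isComplete) hmaps hcontr (mem_closedBall_self hR) (edist_ne_top _ _)
  refine ⟨y, mem_closedBall_zero_iff.mp hy, ?_⟩
  have h2 : T y = y := hfix
  simp only [hT] at h2
  exact (sub_eq_iff_eq_add.mp h2).symm

lemma fderiv_bound' {F : Type*} [NormedAddCommGroup F] [NormedSpace ℂ F]
    (d : F → F) (hd : Differentiable ℂ d) {ζ : F} {δ ε : ℝ} (hδ : 0 < δ) (hε : 0 < ε)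
    (hb : ∀ u : F, dist u ζ < δ → ‖d u‖ ≤ ε) :
    ‖fderiv ℂ d ζ‖ ≤ 3 * ε / δ := by
  apply ContinuousLinearMap.opNorm_le_bound _ (by positivity)
  intro v
  rcases eq_or_ne v 0 with rfl | hv
  · simp
  have hvn : 0 < ‖v‖ := norm_pos_iff.mpr hv
  set f : ℂ → F := fun t => d (ζ + t • v) with hf
  have hfd : Differentiable ℂ f :=
    hd.comp ((differentiable_id.smul_const v).const_add ζ)
  have h1 : HasFDerivAt d (fderiv ℂ d ζ) (ζ + (0:ℂ) • v) := by
    simpa using (hd ζ).hasFDerivAt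
  have h2 : HasDerivAt (fun t : ℂ => ζ + t • v) v 0 := by
    simpa using (((hasDerivAt_id (0:ℂ)).smul_const v).const_add ζ)
  have hDf : HasDerivAt f (fderiv ℂ d ζ v) 0 := by
    simpa [hf, Function.comp_def] using h1.comp_hasDerivAt 0 h2
  have hf0 : f 0 = d ζ := by simp [hf]
  have hmaps : MapsTo f (ball (0:ℂ) (δ/‖v‖)) (ball (f 0) (3*ε)) := by
    intro t ht
    simp only [mem_ball, dist_zero_right] at ht
    have hptd : dist (ζ + t • v) ζ < δ := by
      rw [dist_eq_norm]
      simp only [add_sub_cancel_left]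
      rw [norm_smul]
      calc ‖t‖ * ‖v‖ < (δ/‖v‖) * ‖v‖ := by
            exact mul_lt_mul_of_pos_right ht hvn
        _ = δ := by field_simp
    have hft : ‖f t‖ ≤ ε := hb _ hptd
    have hf0' : ‖f 0‖ ≤ ε := by rw [hf0]; exact hb ζ (by simpa using hδ)
    simp only [mem_ball]
    calc dist (f t) (f 0) ≤ ‖f t‖ + ‖f 0‖ := dist_le_norm_add_norm _ _
      _ < 3 * ε := by linarith
  have hSch := Complex.norm_deriv_le_div_of_mapsTo_ball hfd.differentiableOn (hmaps.mono_right ball_subset_closedBall)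
    (by positivity)
  rw [hDf.deriv] at hSch
  calc ‖fderiv ℂ d ζ v‖ ≤ 3*ε/(δ/‖v‖) := hSch
    _ = 3 * ε / δ * ‖v‖ := by
        rw [div_div_eq_mul_div, mul_div_assoc]
        ring

lemma step_bounds' {c xx ym dK dm dn : ℝ} (hcc : c + c = ym) (hyx : ym ≤ xx) (hx2 : xx ≤ 1/2)
    (hcpos : 0 < c) (hd0 : 0 ≤ dm) (hdK0 : 0 ≤ dK)
    (ihl : (1 - (xx - ym)) * dK ≤ dm) (ihu : dm ≤ (1 + 2*(xx - ym)) * dK)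
    (hlower : dm - c * dm ≤ dn) (hupper : dn ≤ dm + c * dm) :
    (1 - (xx - c)) * dK ≤ dn ∧ dn ≤ (1 + 2*(xx - c)) * dK := by
  have hym : ym = c + c := by linarith
  subst hym
  have hc1 : (0:ℝ) ≤ 1 - c := by linarith
  have hc1' : (0:ℝ) ≤ 1 + c := by linarith
  constructor
  · have e2 : (1-c)*((1 - (xx - (c+c)))*dK) ≤ (1-c)*dm := mul_le_mul_of_nonneg_left ihl hc1
    have hb : 0 ≤ c * (xx - (c+c)) * dK :=
      mul_nonneg (mul_nonneg hcpos.le (by linarith)) hdK0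
    nlinarith [e2, hb]
  · have e2 : (1+c)*dm ≤ (1+c)*((1 + 2*(xx - (c+c)))*dK) := mul_le_mul_of_nonneg_left ihu hc1'
    have hb : 0 ≤ c * (1 - 2*xx) * dK :=
      mul_nonneg (mul_nonneg hcpos.le (by linarith)) hdK0
    have hb2 : 0 ≤ c * c * dK := mul_nonneg (mul_nonneg hcpos.le hcpos.le) hdK0
    nlinarith [e2, hb, hb2]

set_option maxHeartbeats 4000000 in
/-- The parametric push-out method. Given a compact set `L ⊆ ℂᴺ` and a closed ball
`B = closedBall 0 r ⊆ ℂⁿ`, there is a sequence `ε_k > 0` such that: for any decreasing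
neighbourhoods `U_k` of `L` and fibred biholomorphic maps `Φ_k(z,ζ) = (z, φ_k(z,ζ))` of
`U_k × ℂⁿ` fixing the zero section, if each `Φ_k` is `ε_k`-close to the identity on `L × kB`,
then the compositions `Φᵏ = Φ_k ∘ ⋯ ∘ Φ₁` converge locally uniformly on
`Ω = ⋃_k (Φᵏ)⁻¹(L × kB)` to a limit `Φ`, and for each `z ∈ L` the map `Φ(z, ·)` sends the fibre
`Ω_z` biholomorphically onto `ℂⁿ`. -/
theorem stmt_19 (N n : ℕ) (L : Set (EuclideanSpace ℂ (Fin N))) (hLc : IsCompact L)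
    (r : ℝ) (hr : 0 < r) :
    ∃ ε : ℕ → ℝ, (∀ k, 0 < ε k) ∧
      ∀ (U : ℕ → Set (EuclideanSpace ℂ (Fin N))),
        (∀ k, IsOpen (U k)) → (∀ k, L ⊆ U k) → (∀ k, U (k + 1) ⊆ U k) →
      ∀ (Φ : ℕ → EuclideanSpace ℂ (Fin N) × EuclideanSpace ℂ (Fin n) →
              EuclideanSpace ℂ (Fin N) × EuclideanSpace ℂ (Fin n)),
        (∀ k p, (Φ k p).1 = p.1) →
        (∀ k z, Φ k (z, (0 : EuclideanSpace ℂ (Fin n))) = (z, 0)) →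
        (∀ k, DifferentiableOn ℂ (Φ k) (U k ×ˢ univ)) →
        (∀ k, Set.InjOn (Φ k) (U k ×ˢ univ)) →
        (∀ k, Φ k '' (U k ×ˢ univ) = U k ×ˢ univ) →
      ∀ (comp : ℕ → EuclideanSpace ℂ (Fin N) × EuclideanSpace ℂ (Fin n) →
               EuclideanSpace ℂ (Fin N) × EuclideanSpace ℂ (Fin n)),
        comp 0 = id → (∀ k, comp (k + 1) = Φ (k + 1) ∘ comp k) →
        (∀ k : ℕ, 1 ≤ k → ∀ p ∈ L ×ˢ closedBall (0 : EuclideanSpace ℂ (Fin n)) ((k : ℝ) * r),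
          dist (Φ k p) p < ε k) →
      ∀ (Ω : Set (EuclideanSpace ℂ (Fin N) × EuclideanSpace ℂ (Fin n))),
        Ω = {p | p.1 ∈ L ∧ ∃ k : ℕ, 1 ≤ k ∧
          comp k p ∈ L ×ˢ closedBall (0 : EuclideanSpace ℂ (Fin n)) ((k : ℝ) * r)} →
      ∃ Φlim : EuclideanSpace ℂ (Fin N) × EuclideanSpace ℂ (Fin n) →
               EuclideanSpace ℂ (Fin N) × EuclideanSpace ℂ (Fin n),
        TendstoLocallyUniformlyOn (fun k => comp k) Φlim Filter.atTop Ω ∧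
        ∀ z ∈ L,
          Set.InjOn (fun ζ => (Φlim (z, ζ)).2) {ζ | (z, ζ) ∈ Ω} ∧
          (fun ζ => (Φlim (z, ζ)).2) '' {ζ | (z, ζ) ∈ Ω} = univ ∧
          DifferentiableOn ℂ (fun ζ => (Φlim (z, ζ)).2) {ζ | (z, ζ) ∈ Ω} := by
  refine ⟨fun k => r / 2^(k+7), fun k => by positivity, ?_⟩
  intro U hUo hUL hUm Φ hΦ1 hΦ0 hΦd hΦi hΦs comp hc0 hcS hclose Ω hΩ
  -- numeric helpers
  have hp2 : ∀ m : ℕ, (0:ℝ) < 2^m := fun m => by positivity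
  have h1le : ∀ m : ℕ, (1:ℝ) ≤ 2^m := fun m => one_le_pow₀ one_le_two
  have hτpos : ∀ m : ℕ, (0:ℝ) < r / 2^(m+7) := fun m => by positivity
  have hτler : ∀ m : ℕ, r / 2^(m+7) ≤ r := fun m => div_le_self hr.le (h1le _)
  have hdivmono : ∀ (c : ℝ), 0 ≤ c → ∀ k m : ℕ, k ≤ m → c/2^(m+7) ≤ c/2^(k+7) := by
    intro c hc k m h
    exact div_le_div_of_nonneg_left hc (hp2 _) (pow_le_pow_right₀ one_le_two (by omega))
  have hpow : ∀ m : ℕ, r/2^(m+1+7) + r/2^(m+1+7) = r/2^(m+7) := by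
    intro m
    have hexp : (2:ℝ)^(m+1+7) = 2^(m+7) * 2 := by
      rw [show m+1+7 = (m+7)+1 by omega, pow_succ]
    rw [hexp, ← add_div, show r + r = 2*r by ring, mul_comm ((2:ℝ)^(m+7)) 2,
      mul_div_mul_left _ _ (two_ne_zero)]
  have hpow3 : ∀ m : ℕ, (3:ℝ)/2^(m+1+7) + 3/2^(m+1+7) = 3/2^(m+7) := by
    intro m
    have hexp : (2:ℝ)^(m+1+7) = 2^(m+7) * 2 := by
      rw [show m+1+7 = (m+7)+1 by omega, pow_succ]
    rw [hexp, ← add_div, show (3:ℝ) + 3 = 2*3 by ring, mul_comm ((2:ℝ)^(m+7)) 2,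
      mul_div_mul_left _ _ (two_ne_zero)]
  have h128 : ∀ K : ℕ, (3:ℝ)/2^(K+7) ≤ 1/2 := by
    intro K
    have h1 : (128:ℝ) ≤ 2^(K+7) := by
      calc (128:ℝ) = 2^7 := by norm_num
        _ ≤ 2^(K+7) := by
            apply pow_le_pow_right₀ one_le_two
            omega
    rw [div_le_div_iff₀ (hp2 _) (by norm_num)]
    nlinarith
  have h3pos : ∀ m : ℕ, (0:ℝ) < 3/2^(m+7) := fun m => by positivity
  -- basic structure
  have hc1 : ∀ m (p : EuclideanSpace ℂ (Fin N) × EuclideanSpace ℂ (Fin n)),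
      (comp m p).1 = p.1 := by
    intro m
    induction m with
    | zero => intro p; rw [hc0]; rfl
    | succ m ih => intro p; rw [hcS m]; exact (hΦ1 (m+1) (comp m p)).trans (ih p)
  have hsnd : ∀ (p q : EuclideanSpace ℂ (Fin N) × EuclideanSpace ℂ (Fin n)),
      dist p.2 q.2 ≤ dist p q := fun p q => by rw [Prod.dist_eq]; exact le_max_right _ _
  have hnormtr : ∀ (x y : EuclideanSpace ℂ (Fin N) × EuclideanSpace ℂ (Fin n)),
      ‖x.2‖ ≤ ‖y.2‖ + dist x y := by
    intro x y
    have h1 := norm_sub_norm_le x.2 y.2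
    have h2 : ‖x.2 - y.2‖ = dist x.2 y.2 := (dist_eq_norm _ _).symm
    have h3 := hsnd x y
    linarith
  have hstep : ∀ m (p : EuclideanSpace ℂ (Fin N) × EuclideanSpace ℂ (Fin n)),
      p.1 ∈ L → ‖(comp m p).2‖ ≤ ((m:ℝ)+1)*r →
      dist (comp (m+1) p) (comp m p) < r / 2^(m+1+7) := by
    intro m p hp hnorm
    have hmem : comp m p ∈ L ×ˢ closedBall (0 : EuclideanSpace ℂ (Fin n)) (((m+1:ℕ) : ℝ) * r) := by
      constructor
      · rw [hc1]; exact hp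
      · rw [mem_closedBall_zero_iff]; push_cast; exact hnorm
    have := hclose (m+1) (by omega) (comp m p) hmem
    rw [hcS m]
    exact this
  have hgrow : ∀ (p : EuclideanSpace ℂ (Fin N) × EuclideanSpace ℂ (Fin n)),
      p.1 ∈ L → ∀ k, ‖(comp k p).2‖ ≤ (k:ℝ)*r → ∀ m, k ≤ m →
      ‖(comp m p).2‖ ≤ (k:ℝ)*r + (r/2^(k+7) - r/2^(m+7)) := by
    intro p hp k hk m hm
    induction m, hm using Nat.le_induction with
    | base => simpa using hk
    | succ m hkm ih =>
      have hkm' : (k:ℝ) ≤ m := by exact_mod_cast hkm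
      have hb1 : ‖(comp m p).2‖ ≤ ((m:ℝ)+1)*r := by
        have := hτpos m
        have := hτler k
        nlinarith
      have hd := hstep m p hp hb1
      have := hnormtr (comp (m+1) p) (comp m p)
      have hpw := hpow m
      have h1 := hdivmono r hr.le k m hkm
      linarith
  have hdistc : ∀ (p : EuclideanSpace ℂ (Fin N) × EuclideanSpace ℂ (Fin n)),
      p.1 ∈ L → ∀ k, ‖(comp k p).2‖ ≤ (k:ℝ)*r → ∀ m, k ≤ m → ∀ m', m ≤ m' →
      dist (comp m' p) (comp m p) ≤ r/2^(m+7) - r/2^(m'+7) := by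
    intro p hp k hk m hm m' hm'
    induction m', hm' using Nat.le_induction with
    | base => simp
    | succ m' hmm ih =>
      have hkm' : k ≤ m' := le_trans hm hmm
      have hkm'' : (k:ℝ) ≤ m' := by exact_mod_cast hkm'
      have hb1 : ‖(comp m' p).2‖ ≤ ((m':ℝ)+1)*r := by
        have h1 := hgrow p hp k hk m' hkm'
        have := hτpos m'
        have := hτler k
        nlinarith
      have hd := hstep m' p hp hb1
      have htri := dist_triangle (comp (m'+1) p) (comp m' p) (comp m p)
      have hpw := hpow m'
      linarith
  have hwitmem : ∀ (p : EuclideanSpace ℂ (Fin N) × EuclideanSpace ℂ (Fin n)),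
      p.1 ∈ L → ∀ k, 1 ≤ k → ‖(comp k p).2‖ ≤ (k:ℝ)*r → p ∈ Ω := by
    intro p hp k hk hn
    rw [hΩ]
    refine ⟨hp, k, hk, ?_, ?_⟩
    · rw [hc1]; exact hp
    · rw [mem_closedBall_zero_iff]; exact hn
  have hΩwit : ∀ p ∈ Ω, p.1 ∈ L ∧ ∃ k, 1 ≤ k ∧ ‖(comp k p).2‖ ≤ (k:ℝ)*r := by
    intro p hp
    rw [hΩ] at hp
    obtain ⟨h1, k, hk, h2, h3⟩ := hp
    exact ⟨h1, k, hk, mem_closedBall_zero_iff.mp h3⟩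
  have hsmall : ∀ ε' : ℝ, 0 < ε' → ∃ M : ℕ, r/2^(M+7) < ε' := by
    intro ε' hε'
    obtain ⟨M, hM⟩ := pow_unbounded_of_one_lt (r/ε') (one_lt_two (α := ℝ))
    refine ⟨M, ?_⟩
    rw [div_lt_iff₀ (hp2 _)]
    rw [div_lt_iff₀ hε'] at hM
    have h2 : (2:ℝ)^M ≤ 2^(M+7) := by
      apply pow_le_pow_right₀ one_le_two
      omega
    nlinarith
  have hCau : ∀ (p : EuclideanSpace ℂ (Fin N) × EuclideanSpace ℂ (Fin n)),
      p.1 ∈ L → ∀ k, ‖(comp k p).2‖ ≤ (k:ℝ)*r → CauchySeq (fun m => comp m p) := by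
    intro p hp k hk
    rw [Metric.cauchySeq_iff']
    intro ε' hε'
    obtain ⟨M, hM⟩ := hsmall ε' hε'
    refine ⟨max k M, fun m hm => ?_⟩
    have h1 := hdistc p hp k hk (max k M) (le_max_left _ _) m hm
    have h2 := hτpos m
    have h3 := hdivmono r hr.le M (max k M) (le_max_right _ _)
    calc dist (comp m p) (comp (max k M) p) ≤ r/2^(max k M+7) - r/2^(m+7) := h1
      _ < ε' := by linarith
  set Φl : EuclideanSpace ℂ (Fin N) × EuclideanSpace ℂ (Fin n) →
      EuclideanSpace ℂ (Fin N) × EuclideanSpace ℂ (Fin n) :=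
    fun p => Filter.limUnder Filter.atTop (fun m => comp m p) with hΦl
  have htends : ∀ (p : EuclideanSpace ℂ (Fin N) × EuclideanSpace ℂ (Fin n)),
      p.1 ∈ L → ∀ k, ‖(comp k p).2‖ ≤ (k:ℝ)*r →
      Filter.Tendsto (fun m => comp m p) Filter.atTop (nhds (Φl p)) :=
    fun p hp k hk => (hCau p hp k hk).tendsto_limUnder
  have htail : ∀ (p : EuclideanSpace ℂ (Fin N) × EuclideanSpace ℂ (Fin n)),
      p.1 ∈ L → ∀ k, ‖(comp k p).2‖ ≤ (k:ℝ)*r → ∀ m, k ≤ m →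
      dist (Φl p) (comp m p) ≤ r/2^(m+7) := by
    intro p hp k hk m hm
    have h1 : Filter.Tendsto (fun m' => dist (comp m' p) (comp m p)) Filter.atTop
        (nhds (dist (Φl p) (comp m p))) := (htends p hp k hk).dist tendsto_const_nhds
    apply le_of_tendsto h1
    rw [Filter.eventually_atTop]
    refine ⟨m, fun m' hm' => ?_⟩
    have := hdistc p hp k hk m hm m' hm'
    have := hτpos m'
    linarith
  have hcontA : ∀ m (p : EuclideanSpace ℂ (Fin N) × EuclideanSpace ℂ (Fin n)),
      p.1 ∈ L → ContinuousAt (comp m) p := by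
    intro m
    induction m with
    | zero => intro p hp; rw [hc0]; exact continuousAt_id
    | succ m ih =>
      intro p hp
      rw [hcS m]
      have hmem : U (m+1) ×ˢ (univ : Set (EuclideanSpace ℂ (Fin n))) ∈ nhds (comp m p) := by
        apply IsOpen.mem_nhds ((hUo (m+1)).prod isOpen_univ)
        exact ⟨by rw [hc1]; exact hUL _ hp, mem_univ _⟩
      exact (((hΦd (m+1)).differentiableAt hmem).continuousAt).comp (ih p hp)
  -- the locally uniform convergence
  have hTLU : TendstoLocallyUniformlyOn (fun k => comp k) Φl Filter.atTop Ω := by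
    rw [Metric.tendstoLocallyUniformlyOn_iff]
    intro ε' hε' x hx
    obtain ⟨hx1, k, hk1, hxk⟩ := hΩwit x hx
    have hkr : (k:ℝ)*r ≤ ((k:ℝ)+1)*r := by nlinarith
    have hs := hstep k x hx1 (le_trans hxk hkr)
    have hx2 : ‖(comp (k+1) x).2‖ < ((k:ℝ)+1)*r := by
      have h1 := hnormtr (comp (k+1) x) (comp k x)
      have h2 := hτler (k+1)
      have h3 : r/2^(k+1+7) < r := by
        have := hτpos (k+1)
        have h4 := hpow k
        have h5 := hτler k
        linarith
      linarith
    have hWopen : IsOpen {q : EuclideanSpace ℂ (Fin N) × EuclideanSpace ℂ (Fin n) |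
        ‖q.2‖ < ((k:ℝ)+1)*r} := isOpen_lt (continuous_snd.norm) continuous_const
    have hV : (comp (k+1)) ⁻¹' {q : EuclideanSpace ℂ (Fin N) × EuclideanSpace ℂ (Fin n) |
        ‖q.2‖ < ((k:ℝ)+1)*r} ∈ nhds x :=
      (hcontA (k+1) x hx1).preimage_mem_nhds (hWopen.mem_nhds hx2)
    refine ⟨Ω ∩ (comp (k+1)) ⁻¹' {q | ‖q.2‖ < ((k:ℝ)+1)*r},
      Filter.inter_mem self_mem_nhdsWithin (mem_nhdsWithin_of_mem_nhds hV), ?_⟩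
    obtain ⟨M, hM⟩ := hsmall ε' hε'
    rw [Filter.eventually_atTop]
    refine ⟨max (k+1) M, fun m hm y hy => ?_⟩
    obtain ⟨hyΩ, hyV⟩ := hy
    have hy1 : y.1 ∈ L := (hΩwit y hyΩ).1
    have hyk : ‖(comp (k+1) y).2‖ ≤ ((k+1:ℕ):ℝ)*r := by
      push_cast
      exact le_of_lt hyV
    have h1 := htail y hy1 (k+1) hyk m (le_trans (le_max_left _ _) hm)
    have h2 := hdivmono r hr.le M m (le_trans (le_max_right _ _) hm)
    calc dist (Φl y) (comp m y) ≤ r/2^(m+7) := h1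
      _ ≤ r/2^(M+7) := h2
      _ < ε' := hM
  refine ⟨Φl, hTLU, ?_⟩
  intro z hz
  -- fibre helpers
  have hzmem : ∀ j (a : EuclideanSpace ℂ (Fin n)),
      (z, a) ∈ U j ×ˢ (univ : Set (EuclideanSpace ℂ (Fin n))) :=
    fun j a => ⟨hUL j hz, mem_univ _⟩
  have hΦpair : ∀ j (a : EuclideanSpace ℂ (Fin n)), Φ j (z, a) = (z, (Φ j (z, a)).2) :=
    fun j a => Prod.ext (hΦ1 j (z, a)) rfl
  have hcpair : ∀ m (ζ : EuclideanSpace ℂ (Fin n)), comp m (z, ζ) = (z, (comp m (z, ζ)).2) :=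
    fun m ζ => Prod.ext (hc1 m (z, ζ)) rfl
  have hgS : ∀ m (ζ : EuclideanSpace ℂ (Fin n)),
      (comp (m+1) (z, ζ)).2 = (Φ (m+1) (z, (comp m (z, ζ)).2)).2 := by
    intro m ζ
    rw [hcS m]
    simp only [Function.comp_apply]
    conv_lhs => rw [hcpair m ζ]
  have hg0 : ∀ ζ : EuclideanSpace ℂ (Fin n), (comp 0 (z, ζ)).2 = ζ := by
    intro ζ; rw [hc0]; rfl
  have hψd : ∀ j, Differentiable ℂ (fun a : EuclideanSpace ℂ (Fin n) => (Φ j (z, a)).2) := by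
    intro j a
    have h1 : DifferentiableAt ℂ (Φ j) (z, a) :=
      (hΦd j).differentiableAt (IsOpen.mem_nhds ((hUo j).prod isOpen_univ) (hzmem j a))
    have h2 : DifferentiableAt ℂ (fun a : EuclideanSpace ℂ (Fin n) =>
        ((z, a) : EuclideanSpace ℂ (Fin N) × EuclideanSpace ℂ (Fin n))) a :=
      (differentiableAt_const z).prodMk differentiableAt_id
    exact (h1.comp a h2).snd
  have hψinj : ∀ j, Function.Injective (fun a : EuclideanSpace ℂ (Fin n) => (Φ j (z, a)).2) := by
    intro j a b hab
    simp only at hab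
    have h := hΦi j (hzmem j a) (hzmem j b) (by rw [hΦpair j a, hΦpair j b, hab])
    exact congrArg Prod.snd h
  have hψsurj : ∀ j, Function.Surjective (fun a : EuclideanSpace ℂ (Fin n) => (Φ j (z, a)).2) := by
    intro j w
    have hmem : ((z, w) : EuclideanSpace ℂ (Fin N) × EuclideanSpace ℂ (Fin n))
        ∈ Φ j '' (U j ×ˢ univ) := by rw [hΦs j]; exact hzmem j w
    obtain ⟨q, hq, hqe⟩ := hmem
    have hq1 : q.1 = z := by
      have h := hΦ1 j q
      rw [hqe] at h
      exact h.symm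
    refine ⟨q.2, ?_⟩
    have hq' : ((z, q.2) : EuclideanSpace ℂ (Fin N) × EuclideanSpace ℂ (Fin n)) = q :=
      Prod.ext hq1.symm rfl
    simp only [hq', hqe]
  have hψclose : ∀ j : ℕ, 1 ≤ j → ∀ a : EuclideanSpace ℂ (Fin n), ‖a‖ ≤ (j:ℝ)*r →
      ‖(Φ j (z, a)).2 - a‖ ≤ r/2^(j+7) := by
    intro j hj a ha
    have h := hclose j hj (z, a) ⟨hz, mem_closedBall_zero_iff.mpr ha⟩
    have h2 := hsnd (Φ j (z, a)) (z, a)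
    rw [← dist_eq_norm]
    exact le_of_lt (lt_of_le_of_lt h2 h)
  have hgd : ∀ m, Differentiable ℂ (fun ζ : EuclideanSpace ℂ (Fin n) => (comp m (z, ζ)).2) := by
    intro m
    induction m with
    | zero =>
      have he : (fun ζ : EuclideanSpace ℂ (Fin n) => (comp 0 (z, ζ)).2) = id := funext fun ζ => hg0 ζ
      rw [he]; exact differentiable_id
    | succ m ih =>
      have he : (fun ζ : EuclideanSpace ℂ (Fin n) => (comp (m+1) (z, ζ)).2)
          = (fun a : EuclideanSpace ℂ (Fin n) => (Φ (m+1) (z, a)).2)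
            ∘ (fun ζ : EuclideanSpace ℂ (Fin n) => (comp m (z, ζ)).2) := funext fun ζ => hgS m ζ
      rw [he]; exact (hψd (m+1)).comp ih
  have hginj : ∀ m, Function.Injective (fun ζ : EuclideanSpace ℂ (Fin n) => (comp m (z, ζ)).2) := by
    intro m
    induction m with
    | zero =>
      have he : (fun ζ : EuclideanSpace ℂ (Fin n) => (comp 0 (z, ζ)).2) = id := funext fun ζ => hg0 ζ
      rw [he]; exact Function.injective_id
    | succ m ih =>
      have he : (fun ζ : EuclideanSpace ℂ (Fin n) => (comp (m+1) (z, ζ)).2)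
          = (fun a : EuclideanSpace ℂ (Fin n) => (Φ (m+1) (z, a)).2)
            ∘ (fun ζ : EuclideanSpace ℂ (Fin n) => (comp m (z, ζ)).2) := funext fun ζ => hgS m ζ
      rw [he]; exact (hψinj (m+1)).comp ih
  have hgsurj : ∀ m, Function.Surjective (fun ζ : EuclideanSpace ℂ (Fin n) => (comp m (z, ζ)).2) := by
    intro m
    induction m with
    | zero =>
      have he : (fun ζ : EuclideanSpace ℂ (Fin n) => (comp 0 (z, ζ)).2) = id := funext fun ζ => hg0 ζ
      rw [he]; exact Function.surjective_id
    | succ m ih =>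
      have he : (fun ζ : EuclideanSpace ℂ (Fin n) => (comp (m+1) (z, ζ)).2)
          = (fun a : EuclideanSpace ℂ (Fin n) => (Φ (m+1) (z, a)).2)
            ∘ (fun ζ : EuclideanSpace ℂ (Fin n) => (comp m (z, ζ)).2) := funext fun ζ => hgS m ζ
      rw [he]; exact (hψsurj (m+1)).comp ih
  have hlip : ∀ (j:ℕ) (a b : EuclideanSpace ℂ (Fin n)), ‖a‖ ≤ (j:ℝ)*r → ‖b‖ ≤ (j:ℝ)*r →
      dist ((Φ (j+1) (z, a)).2 - a) ((Φ (j+1) (z, b)).2 - b) ≤ 3/2^(j+1+7) * dist a b := by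
    intro j a b ha hb
    have hc := schwarz_lip' (fun u => (Φ (j+1) (z, u)).2 - u)
      ((hψd (j+1)).sub differentiable_id) hr (hτpos (j+1))
      (fun u hu => hψclose (j+1) (by omega) u (by push_cast; linarith)) ha hb
    have he : 3 * (r/2^(j+1+7)) / r = 3/2^(j+1+7) := by
      rw [mul_div_assoc, div_div, mul_comm ((2:ℝ)^(j+1+7)) r, ← div_div, div_self hr.ne',
        mul_one_div]
    rw [he] at hc
    exact hc
  have hballs : ∀ (ζ : EuclideanSpace ℂ (Fin n)) (K : ℕ), ‖(comp K (z, ζ)).2‖ ≤ (K:ℝ)*r →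
      ∀ j, K ≤ j → ‖(comp j (z, ζ)).2‖ ≤ (j:ℝ)*r := by
    intro ζ K hK j hj
    rcases eq_or_lt_of_le hj with rfl | hlt
    · exact hK
    · have h1 := hgrow (z, ζ) hz K hK j hj
      have h2 : (K:ℝ)+1 ≤ (j:ℝ) := by exact_mod_cast hlt
      have h3 := hτler K
      have h4 := hτpos j
      nlinarith
  have hLU : ∀ (ζ ζ' : EuclideanSpace ℂ (Fin n)) (K : ℕ) (m : ℕ), K ≤ m →
      (∀ j, K ≤ j → j ≤ m → ‖(comp j (z, ζ)).2‖ ≤ (j:ℝ)*r ∧ ‖(comp j (z, ζ')).2‖ ≤ (j:ℝ)*r) →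
      (1 - (3/2^(K+7) - 3/2^(m+7))) * dist ((comp K (z, ζ)).2) ((comp K (z, ζ')).2)
        ≤ dist ((comp m (z, ζ)).2) ((comp m (z, ζ')).2) ∧
      dist ((comp m (z, ζ)).2) ((comp m (z, ζ')).2)
        ≤ (1 + 2*(3/2^(K+7) - 3/2^(m+7))) * dist ((comp K (z, ζ)).2) ((comp K (z, ζ')).2) := by
    intro ζ ζ' K m hm hb
    induction m, hm using Nat.le_induction with
    | base =>
      constructor <;> · simp [sub_self]
    | succ m hKm ih =>
      have hb' : ∀ j, K ≤ j → j ≤ m →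
          ‖(comp j (z, ζ)).2‖ ≤ (j:ℝ)*r ∧ ‖(comp j (z, ζ')).2‖ ≤ (j:ℝ)*r :=
        fun j h1 h2 => hb j h1 (le_trans h2 (Nat.le_succ m))
      obtain ⟨ihl, ihu⟩ := ih hb'
      have hba := (hb m hKm (Nat.le_succ m)).1
      have hbb := (hb m hKm (Nat.le_succ m)).2
      have hl := hlip m _ _ hba hbb
      have hvec : (Φ (m+1) (z, (comp m (z, ζ)).2)).2 - (Φ (m+1) (z, (comp m (z, ζ')).2)).2
          = ((comp m (z, ζ)).2 - (comp m (z, ζ')).2)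
            + (((Φ (m+1) (z, (comp m (z, ζ)).2)).2 - (comp m (z, ζ)).2)
              - ((Φ (m+1) (z, (comp m (z, ζ')).2)).2 - (comp m (z, ζ')).2)) := by abel
      have hdn : dist ((comp (m+1) (z, ζ)).2) ((comp (m+1) (z, ζ')).2)
          = ‖(Φ (m+1) (z, (comp m (z, ζ)).2)).2 - (Φ (m+1) (z, (comp m (z, ζ')).2)).2‖ := by
        rw [hgS, hgS, dist_eq_norm]
      have hnd : ‖((Φ (m+1) (z, (comp m (z, ζ)).2)).2 - (comp m (z, ζ)).2)
            - ((Φ (m+1) (z, (comp m (z, ζ')).2)).2 - (comp m (z, ζ')).2)‖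
          ≤ 3/2^(m+1+7) * dist ((comp m (z, ζ)).2) ((comp m (z, ζ')).2) := by
        rw [← dist_eq_norm]; exact hl
      have hdmn : ‖(comp m (z, ζ)).2 - (comp m (z, ζ')).2‖
          = dist ((comp m (z, ζ)).2) ((comp m (z, ζ')).2) := (dist_eq_norm _ _).symm
      have hupper : dist ((comp (m+1) (z, ζ)).2) ((comp (m+1) (z, ζ')).2)
          ≤ dist ((comp m (z, ζ)).2) ((comp m (z, ζ')).2)
            + 3/2^(m+1+7) * dist ((comp m (z, ζ)).2) ((comp m (z, ζ')).2) := by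
        rw [hdn, hvec]
        calc ‖_ + _‖ ≤ ‖(comp m (z, ζ)).2 - (comp m (z, ζ')).2‖ + _ := norm_add_le _ _
          _ ≤ _ := by rw [hdmn]; linarith [hnd]
      have hlower : dist ((comp m (z, ζ)).2) ((comp m (z, ζ')).2)
            - 3/2^(m+1+7) * dist ((comp m (z, ζ)).2) ((comp m (z, ζ')).2)
          ≤ dist ((comp (m+1) (z, ζ)).2) ((comp (m+1) (z, ζ')).2) := by
        rw [hdn, hvec]
        set x := (comp m (z, ζ)).2 - (comp m (z, ζ')).2
        set y := ((Φ (m+1) (z, (comp m (z, ζ)).2)).2 - (comp m (z, ζ)).2)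
              - ((Φ (m+1) (z, (comp m (z, ζ')).2)).2 - (comp m (z, ζ')).2)
        have h5 := norm_sub_le (x + y) y
        rw [add_sub_cancel_right] at h5
        have : ‖x‖ = dist ((comp m (z, ζ)).2) ((comp m (z, ζ')).2) := hdmn
        linarith [hnd, h5]
      exact step_bounds' (hpow3 m) (hdivmono 3 (by norm_num) K m hKm) (h128 K)
        (by positivity) dist_nonneg dist_nonneg ihl ihu hlower hupper
  have htailz : ∀ (ζ : EuclideanSpace ℂ (Fin n)) (K : ℕ), ‖(comp K (z, ζ)).2‖ ≤ (K:ℝ)*r →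
      ∀ m, K ≤ m → dist ((Φl (z, ζ)).2) ((comp m (z, ζ)).2) ≤ r/2^(m+7) :=
    fun ζ K hK m hm =>
      le_trans (hsnd (Φl (z, ζ)) (comp m (z, ζ))) (htail (z, ζ) hz K hK m hm)
  have htendz : ∀ (ζ : EuclideanSpace ℂ (Fin n)) (K : ℕ), ‖(comp K (z, ζ)).2‖ ≤ (K:ℝ)*r →
      Filter.Tendsto (fun m => (comp m (z, ζ)).2) Filter.atTop (nhds ((Φl (z, ζ)).2)) := by
    intro ζ K hK
    exact (continuous_snd.tendsto (Φl (z, ζ))).comp (htends (z, ζ) hz K hK)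
  refine ⟨?_, ?_, ?_⟩
  · -- injectivity
    intro ζ hζ ζ' hζ' heq
    obtain ⟨-, k, hk1, hk⟩ := hΩwit (z, ζ) hζ
    obtain ⟨-, k', hk1', hk'⟩ := hΩwit (z, ζ') hζ'
    have hKζ : ‖(comp (max k k') (z, ζ)).2‖ ≤ ((max k k' : ℕ):ℝ)*r :=
      hballs ζ k hk (max k k') (le_max_left _ _)
    have hKζ' : ‖(comp (max k k') (z, ζ')).2‖ ≤ ((max k k' : ℕ):ℝ)*r :=
      hballs ζ' k' hk' (max k k') (le_max_right _ _)
    have hdt : Filter.Tendsto (fun m => dist ((comp m (z, ζ)).2) ((comp m (z, ζ')).2))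
        Filter.atTop (nhds (dist ((Φl (z, ζ)).2) ((Φl (z, ζ')).2))) :=
      (htendz ζ (max k k') hKζ).dist (htendz ζ' (max k k') hKζ')
    have hge : (1 - 3/2^((max k k')+7)) * dist ((comp (max k k') (z, ζ)).2) ((comp (max k k') (z, ζ')).2)
        ≤ dist ((Φl (z, ζ)).2) ((Φl (z, ζ')).2) := by
      apply ge_of_tendsto hdt
      rw [Filter.eventually_atTop]
      refine ⟨max k k', fun m hm => ?_⟩
      have h := (hLU ζ ζ' (max k k') m hm (fun j h1 h2 =>
        ⟨hballs ζ k hk j (le_trans (le_max_left _ _) h1),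
         hballs ζ' k' hk' j (le_trans (le_max_right _ _) h1)⟩)).1
      have h2 := h3pos m
      have hdK0 : (0:ℝ) ≤ dist ((comp (max k k') (z, ζ)).2) ((comp (max k k') (z, ζ')).2) :=
        dist_nonneg
      nlinarith [mul_nonneg (h3pos m).le hdK0]
    have heq' : (Φl (z, ζ)).2 = (Φl (z, ζ')).2 := heq
    rw [heq', dist_self] at hge
    have hx2 := h128 (max k k')
    have hdK0 : (0:ℝ) ≤ dist ((comp (max k k') (z, ζ)).2) ((comp (max k k') (z, ζ')).2) :=
      dist_nonneg
    have hdK : dist ((comp (max k k') (z, ζ)).2) ((comp (max k k') (z, ζ')).2) = 0 := by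
      nlinarith [mul_le_mul_of_nonneg_right hx2 hdK0]
    exact hginj (max k k') (dist_eq_zero.mp hdK)
  · -- surjectivity
    rw [Set.eq_univ_iff_forall]
    intro w
    obtain ⟨k, hk1, hkr⟩ : ∃ k : ℕ, 1 ≤ k ∧ ‖w‖ + 2*r ≤ (k:ℝ)*r := by
      refine ⟨⌈‖w‖ / r⌉₊ + 2, by omega, ?_⟩
      have h1 := Nat.le_ceil (‖w‖ / r)
      have h2 : (‖w‖/r) * r = ‖w‖ := by field_simp
      push_cast
      nlinarith [mul_le_mul_of_nonneg_right h1 hr.le, h2, hr]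
    choose ζs hζs using fun m => hgsurj m w
    have hzs : ∀ m, (comp m (z, ζs m)).2 = w := hζs
    have hstepdown : ∀ (j:ℕ) (ζ : EuclideanSpace ℂ (Fin n)),
        ‖(comp (j+1) (z, ζ)).2‖ + r/2^(j+1+7) ≤ (j:ℝ)*r →
        ‖(comp j (z, ζ)).2‖ ≤ (j:ℝ)*r ∧
        ‖(comp j (z, ζ)).2‖ ≤ ‖(comp (j+1) (z, ζ)).2‖ + r/2^(j+1+7) := by
      intro j ζ hcond
      have hjr0 : (0:ℝ) ≤ (j:ℝ)*r := by positivity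
      have hlip2 : ∀ a b : EuclideanSpace ℂ (Fin n), ‖a‖ ≤ (j:ℝ)*r → ‖b‖ ≤ (j:ℝ)*r →
          dist ((Φ (j+1) (z, a)).2 - a) ((Φ (j+1) (z, b)).2 - b) ≤ 2⁻¹ * dist a b := by
        intro a b ha hb
        have h1 := hlip j a b ha hb
        have h2 : (3:ℝ)/2^(j+1+7) ≤ 2⁻¹ := by
          have := h128 (j+1)
          norm_num at this ⊢
          linarith
        have h3 : (0:ℝ) ≤ dist a b := dist_nonneg
        nlinarith
      obtain ⟨u, hu, hue⟩ := near_id_fixed' (fun a => (Φ (j+1) (z, a)).2 - a) hjr0 hlip2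
        (fun u hu => hψclose (j+1) (by omega) u (by push_cast; linarith)) hcond
      have hue' : (Φ (j+1) (z, u)).2 = (comp (j+1) (z, ζ)).2 := by
        rw [← hue]; abel
      have hgj : (Φ (j+1) (z, (comp j (z, ζ)).2)).2 = (comp (j+1) (z, ζ)).2 := (hgS j ζ).symm
      have hequ : u = (comp j (z, ζ)).2 := hψinj (j+1) (hue'.trans hgj.symm)
      constructor
      · rw [← hequ]; exact hu
      · have hjb : ‖(comp j (z, ζ)).2‖ ≤ ((j+1:ℕ):ℝ)*r := by
          rw [← hequ]; push_cast
          nlinarith [hu, hr]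
        have hcl := hψclose (j+1) (by omega) ((comp j (z, ζ)).2) (by push_cast at hjb ⊢; exact hjb)
        have hid : (comp j (z, ζ)).2 = (comp (j+1) (z, ζ)).2
            - ((Φ (j+1) (z, (comp j (z, ζ)).2)).2 - (comp j (z, ζ)).2) := by
          rw [hgS j ζ]; abel
        calc ‖(comp j (z, ζ)).2‖
            = ‖(comp (j+1) (z, ζ)).2 - ((Φ (j+1) (z, (comp j (z, ζ)).2)).2 - (comp j (z, ζ)).2)‖ := by
              rw [← hid]
          _ ≤ ‖(comp (j+1) (z, ζ)).2‖ + ‖(Φ (j+1) (z, (comp j (z, ζ)).2)).2 - (comp j (z, ζ)).2‖ :=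
              norm_sub_le _ _
          _ ≤ ‖(comp (j+1) (z, ζ)).2‖ + r/2^(j+1+7) := by linarith [hcl]
    have hdown : ∀ (i m j : ℕ), j + i = m → k ≤ j →
        ‖(comp j (z, ζs m)).2‖ ≤ ‖w‖ + (r/2^(j+7) - r/2^(m+7)) := by
      intro i
      induction i with
      | zero =>
        intro m j hjm hkj
        have hje : j = m := by omega
        subst hje
        rw [hzs]
        simp
      | succ i ih =>
        intro m j hjm hkj
        have h1 := ih m (j+1) (by omega) (by omega)
        have hkjr : (k:ℝ) ≤ (j:ℝ) := by exact_mod_cast hkj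
        have hcond : ‖(comp (j+1) (z, ζs m)).2‖ + r/2^(j+1+7) ≤ (j:ℝ)*r := by
          have h2 := hτler (j+1)
          have h3 := hτpos m
          have h5 : (k:ℝ)*r ≤ (j:ℝ)*r := mul_le_mul_of_nonneg_right hkjr hr.le
          linarith [h1, hkr]
        obtain ⟨hA, hB⟩ := hstepdown j (ζs m) hcond
        have hpw := hpow j
        linarith [h1, hB]
    have hballd : ∀ m j, k ≤ j → j ≤ m → ‖(comp j (z, ζs m)).2‖ ≤ (j:ℝ)*r := by
      intro m j hkj hjm
      have h1 := hdown (m - j) m j (by omega) hkj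
      have hkjr : (k:ℝ) ≤ (j:ℝ) := by exact_mod_cast hkj
      have h2 := hτler j
      have h3 := hτpos m
      have h5 : (k:ℝ)*r ≤ (j:ℝ)*r := mul_le_mul_of_nonneg_right hkjr hr.le
      linarith [hkr]
    have hDm : ∀ m, k ≤ m →
        dist ((comp m (z, ζs m)).2) ((comp m (z, ζs (m+1))).2) ≤ r/2^(m+1+7) := by
      intro m hkm
      have ha : ‖(comp m (z, ζs (m+1))).2‖ ≤ ((m+1:ℕ):ℝ)*r := by
        have h1 := hballd (m+1) m hkm (Nat.le_succ m)
        have hmr : (m:ℝ)*r ≤ ((m+1:ℕ):ℝ)*r := by push_cast; nlinarith [hr]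
        linarith
      have hw' : (Φ (m+1) (z, (comp m (z, ζs (m+1))).2)).2 = w :=
        (hgS m (ζs (m+1))).symm.trans (hzs (m+1))
      have hcl := hψclose (m+1) (by omega) ((comp m (z, ζs (m+1))).2) (by push_cast at ha ⊢; exact ha)
      rw [hzs m, dist_eq_norm, ← hw']
      exact hcl
    have hvd : ∀ i:ℕ, dist ((comp k (z, ζs (k+i))).2) ((comp k (z, ζs (k+i+1))).2)
        ≤ (r/2^(k+7)) * (1/2)^i := by
      intro i
      have hm := hDm (k+i) (by omega)
      have hLU1 := (hLU (ζs (k+i)) (ζs (k+i+1)) k (k+i) (by omega) (fun j h1 h2 =>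
        ⟨hballd (k+i) j h1 h2, hballd (k+i+1) j h1 (by omega)⟩)).1
      have hcoef : (1:ℝ)/2 ≤ 1 - (3/2^(k+7) - 3/2^(k+i+7)) := by
        have := h128 k
        have := h3pos (k+i)
        linarith
      have hdk0 : (0:ℝ) ≤ dist ((comp k (z, ζs (k+i))).2) ((comp k (z, ζs (k+i+1))).2) :=
        dist_nonneg
      have h2 : dist ((comp k (z, ζs (k+i))).2) ((comp k (z, ζs (k+i+1))).2)
          ≤ 2 * (r/2^(k+i+1+7)) := by
        linarith [hLU1, hm, mul_le_mul_of_nonneg_right hcoef hdk0]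
      have hsplit : (2:ℝ)^(k+i+7) = 2^(k+7) * 2^i := by rw [← pow_add]; congr 1; omega
      have hsplit2 : (2:ℝ)^(k+i+1+7) = 2^(k+7) * 2^i * 2 := by
        rw [show k+i+1+7 = (k+i+7)+1 by omega, pow_succ, hsplit]
      calc dist ((comp k (z, ζs (k+i))).2) ((comp k (z, ζs (k+i+1))).2)
          ≤ 2 * (r/2^(k+i+1+7)) := h2
        _ = (r/2^(k+7)) * (1/2)^i := by
            rw [hsplit2, one_div, inv_pow]
            have h7 := (hp2 (k+7)).ne'
            have h8 := (hp2 i).ne'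
            field_simp
    have hCau2 : CauchySeq (fun i => (comp k (z, ζs (k+i))).2) :=
      cauchySeq_of_le_geometric (1/2) (r/2^(k+7)) (by norm_num) (fun i => hvd i)
    obtain ⟨u, hut⟩ := cauchySeq_tendsto_of_complete hCau2
    have hub : ‖u‖ ≤ ‖w‖ + r := by
      apply le_of_tendsto hut.norm
      rw [Filter.eventually_atTop]
      refine ⟨0, fun i _ => ?_⟩
      have h1 := hdown i (k+i) k rfl le_rfl
      have h2 := hτler k
      have h3 := hτpos (k+i)
      linarith
    obtain ⟨ζ, hζu⟩ := hgsurj k u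
    have hζu' : (comp k (z, ζ)).2 = u := hζu
    have hζk : ‖(comp k (z, ζ)).2‖ ≤ (k:ℝ)*r := by
      rw [hζu']
      linarith [hub, hkr, hr]
    have hζΩ : (z, ζ) ∈ Ω := hwitmem (z, ζ) hz k hk1 hζk
    have hdistm : ∀ i:ℕ, dist ((comp (k+i) (z, ζ)).2) w
        ≤ 2 * dist ((comp k (z, ζ)).2) ((comp k (z, ζs (k+i))).2) := by
      intro i
      have hLU2 := (hLU ζ (ζs (k+i)) k (k+i) (by omega) (fun j h1 h2 =>
        ⟨hballs ζ k hζk j h1, hballd (k+i) j h1 h2⟩)).2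
      have hwi : (comp (k+i) (z, ζs (k+i))).2 = w := hzs (k+i)
      rw [← hwi]
      have hcoef : 1 + 2*((3:ℝ)/2^(k+7) - 3/2^(k+i+7)) ≤ 2 := by
        have := h128 k
        have := h3pos (k+i)
        linarith
      have hd0 : (0:ℝ) ≤ dist ((comp k (z, ζ)).2) ((comp k (z, ζs (k+i))).2) := dist_nonneg
      linarith [hLU2, mul_le_mul_of_nonneg_right hcoef hd0]
    have htw : Filter.Tendsto (fun i => (comp (k+i) (z, ζ)).2) Filter.atTop (nhds w) := by
      rw [tendsto_iff_dist_tendsto_zero]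
      apply squeeze_zero (fun i => dist_nonneg) hdistm
      have h0 : Filter.Tendsto (fun i => dist ((comp k (z, ζ)).2) ((comp k (z, ζs (k+i))).2))
          Filter.atTop (nhds 0) := by
        have h1 := tendsto_iff_dist_tendsto_zero.mp hut
        have h2 : (fun i => dist ((comp k (z, ζ)).2) ((comp k (z, ζs (k+i))).2))
            = (fun i => dist ((comp k (z, ζs (k+i))).2) u) := by
          funext i; rw [hζu', dist_comm]
        rw [h2]; exact h1
      simpa using h0.const_mul 2
    have hts : Filter.Tendsto (fun i => (comp (k+i) (z, ζ)).2) Filter.atTop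
        (nhds ((Φl (z, ζ)).2)) := by
      have h1 := (htendz ζ k hζk).comp (Filter.tendsto_add_atTop_nat k)
      have hfun : (fun i => (comp (k+i) (z, ζ)).2) = (fun i => (comp (i+k) (z, ζ)).2) := by
        funext i; rw [add_comm]
      rw [hfun]
      exact h1
    have hfin : (Φl (z, ζ)).2 = w := tendsto_nhds_unique hts htw
    exact ⟨ζ, hζΩ, hfin⟩
  · -- differentiability
    intro ζ₀ hζ₀
    obtain ⟨-, k, hk1, hk⟩ := hΩwit (z, ζ₀) hζ₀
    have hb1 : ‖(comp k (z, ζ₀)).2‖ ≤ ((k:ℝ)+1)*r := by nlinarith [hk, hr]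
    have hs := hstep k (z, ζ₀) hz hb1
    have hstrict : ‖(comp (k+1) (z, ζ₀)).2‖ < ((k:ℝ)+1)*r := by
      have h1 := hnormtr (comp (k+1) (z, ζ₀)) (comp k (z, ζ₀))
      have h2 := hpow k
      have h3 := hτpos (k+1)
      have h4 := hτler k
      linarith [hk]
    have hcV : Continuous (fun ζ : EuclideanSpace ℂ (Fin n) => (comp (k+1) (z, ζ)).2) :=
      (hgd (k+1)).continuous
    have hVopen : IsOpen ((fun ζ : EuclideanSpace ℂ (Fin n) => (comp (k+1) (z, ζ)).2) ⁻¹'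
        ball 0 (((k:ℝ)+1)*r)) := hcV.isOpen_preimage _ isOpen_ball
    have hζ₀V : ζ₀ ∈ (fun ζ : EuclideanSpace ℂ (Fin n) => (comp (k+1) (z, ζ)).2) ⁻¹'
        ball 0 (((k:ℝ)+1)*r) := mem_ball_zero_iff.mpr hstrict
    have hVwit : ∀ ζ ∈ (fun ζ : EuclideanSpace ℂ (Fin n) => (comp (k+1) (z, ζ)).2) ⁻¹'
        ball 0 (((k:ℝ)+1)*r), ‖(comp (k+1) (z, ζ)).2‖ ≤ ((k+1:ℕ):ℝ)*r := by
      intro ζ hζV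
      push_cast
      exact (mem_ball_zero_iff.mp hζV).le
    have hVtail : ∀ ζ ∈ (fun ζ : EuclideanSpace ℂ (Fin n) => (comp (k+1) (z, ζ)).2) ⁻¹'
        ball 0 (((k:ℝ)+1)*r), ∀ m, k+1 ≤ m →
        dist ((Φl (z, ζ)).2) ((comp m (z, ζ)).2) ≤ r/2^(m+7) :=
      fun ζ hζV m hm => htailz ζ (k+1) (hVwit ζ hζV) m hm
    obtain ⟨δ, hδpos, hδV⟩ : ∃ δ : ℝ, 0 < δ ∧ ball ζ₀ (2*δ) ⊆
        (fun ζ : EuclideanSpace ℂ (Fin n) => (comp (k+1) (z, ζ)).2) ⁻¹'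
          ball 0 (((k:ℝ)+1)*r) := by
      obtain ⟨δ', hδ', hsub⟩ := Metric.isOpen_iff.mp hVopen ζ₀ hζ₀V
      refine ⟨δ'/2, by linarith, fun u hu => hsub ?_⟩
      rw [mem_ball] at hu ⊢
      linarith
    have hballV : ball ζ₀ δ ⊆ (fun ζ : EuclideanSpace ℂ (Fin n) => (comp (k+1) (z, ζ)).2) ⁻¹'
        ball 0 (((k:ℝ)+1)*r) := by
      intro u hu
      apply hδV
      rw [mem_ball] at hu ⊢
      linarith
    have hdiffb : ∀ (m m' : ℕ), k+1 ≤ m → m ≤ m' → ∀ ζ ∈ ball ζ₀ δ,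
        ‖fderiv ℂ (fun ζ' : EuclideanSpace ℂ (Fin n) => (comp m' (z, ζ')).2) ζ
          - fderiv ℂ (fun ζ' : EuclideanSpace ℂ (Fin n) => (comp m (z, ζ')).2) ζ‖
          ≤ 3 * (2*(r/2^(m+7))) / δ := by
      intro m m' hm hmm ζ hζ
      have hbound : ∀ u : EuclideanSpace ℂ (Fin n), dist u ζ < δ →
          ‖(comp m' (z, u)).2 - (comp m (z, u)).2‖ ≤ 2*(r/2^(m+7)) := by
        intro u hu
        have huV : u ∈ (fun ζ : EuclideanSpace ℂ (Fin n) => (comp (k+1) (z, ζ)).2) ⁻¹'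
            ball 0 (((k:ℝ)+1)*r) := by
          apply hδV
          rw [mem_ball] at hζ ⊢
          have := dist_triangle u ζ ζ₀
          linarith
        have h1 := hVtail u huV m hm
        have h2 := hVtail u huV m' (le_trans hm hmm)
        have h3 := hdivmono r hr.le m m' hmm
        have h4 := dist_triangle ((comp m' (z, u)).2) ((Φl (z, u)).2) ((comp m (z, u)).2)
        rw [← dist_eq_norm]
        rw [dist_comm] at h2
        linarith
      have hfd : fderiv ℂ (fun ζ' : EuclideanSpace ℂ (Fin n) =>
            (comp m' (z, ζ')).2 - (comp m (z, ζ')).2) ζ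
          = fderiv ℂ (fun ζ' : EuclideanSpace ℂ (Fin n) => (comp m' (z, ζ')).2) ζ
            - fderiv ℂ (fun ζ' : EuclideanSpace ℂ (Fin n) => (comp m (z, ζ')).2) ζ :=
        fderiv_sub (hgd m' ζ) (hgd m ζ)
      rw [← hfd]
      exact fderiv_bound' _ ((hgd m').sub (hgd m)) hδpos (by positivity) hbound
    have hsmallδ : ∀ ε' : ℝ, 0 < ε' → ∃ M : ℕ, k+1 ≤ M ∧ 3*(2*(r/2^(M+7)))/δ < ε' := by
      intro ε' hε'
      obtain ⟨M0, hM0⟩ := hsmall (ε'*δ/7) (by positivity)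
      refine ⟨max (k+1) M0, le_max_left _ _, ?_⟩
      have h1 := hdivmono r hr.le M0 (max (k+1) M0) (le_max_right _ _)
      have h2 : r/2^((max (k+1) M0)+7) < ε'*δ/7 := lt_of_le_of_lt h1 hM0
      rw [div_lt_iff₀ hδpos]
      nlinarith [hδpos, hε']
    have hDcau : ∀ ζ ∈ ball ζ₀ δ, CauchySeq (fun m =>
        fderiv ℂ (fun ζ' : EuclideanSpace ℂ (Fin n) => (comp m (z, ζ')).2) ζ) := by
      intro ζ hζ
      rw [Metric.cauchySeq_iff']
      intro ε' hε'
      obtain ⟨M, hM1, hM2⟩ := hsmallδ ε' hε'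
      refine ⟨M, fun m hm => ?_⟩
      have h1 := hdiffb M m hM1 hm ζ hζ
      rw [dist_eq_norm]
      exact lt_of_le_of_lt h1 hM2
    have hDtail : ∀ ζ ∈ ball ζ₀ δ, ∀ m, k+1 ≤ m →
        dist (Filter.limUnder Filter.atTop (fun m' =>
          fderiv ℂ (fun ζ' : EuclideanSpace ℂ (Fin n) => (comp m' (z, ζ')).2) ζ))
          (fderiv ℂ (fun ζ' : EuclideanSpace ℂ (Fin n) => (comp m (z, ζ')).2) ζ)
          ≤ 3*(2*(r/2^(m+7)))/δ := by
      intro ζ hζ m hm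
      have htnd := (hDcau ζ hζ).tendsto_limUnder
      apply le_of_tendsto (htnd.dist (tendsto_const_nhds
        (x := fderiv ℂ (fun ζ' : EuclideanSpace ℂ (Fin n) => (comp m (z, ζ')).2) ζ)))
      rw [Filter.eventually_atTop]
      refine ⟨m, fun m' hm' => ?_⟩
      rw [dist_eq_norm]
      exact hdiffb m m' hm hm' ζ hζ
    have hTU : TendstoUniformlyOn (fun m => fun ζ : EuclideanSpace ℂ (Fin n) =>
        fderiv ℂ (fun ζ' : EuclideanSpace ℂ (Fin n) => (comp m (z, ζ')).2) ζ)
        (fun ζ => Filter.limUnder Filter.atTop (fun m' =>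
          fderiv ℂ (fun ζ' : EuclideanSpace ℂ (Fin n) => (comp m' (z, ζ')).2) ζ))
        Filter.atTop (ball ζ₀ δ) := by
      rw [Metric.tendstoUniformlyOn_iff]
      intro ε' hε'
      obtain ⟨M, hM1, hM2⟩ := hsmallδ ε' hε'
      rw [Filter.eventually_atTop]
      refine ⟨M, fun m hm ζ hζ => ?_⟩
      have h1 := hDtail ζ hζ m (le_trans hM1 hm)
      have h2 : (3:ℝ)*(2*(r/2^(m+7)))/δ ≤ 3*(2*(r/2^(M+7)))/δ := by
        have := hdivmono r hr.le M m hm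
        rw [div_le_div_iff_of_pos_right hδpos]
        linarith
      exact lt_of_le_of_lt (le_trans h1 h2) hM2
    have hfg : ∀ ζ ∈ ball ζ₀ δ, Filter.Tendsto (fun m => (comp m (z, ζ)).2)
        Filter.atTop (nhds ((Φl (z, ζ)).2)) := by
      intro ζ hζ
      exact htendz ζ (k+1) (hVwit ζ (hballV hζ))
    have hHF := hasFDerivAt_of_tendstoUniformlyOn isOpen_ball hTU
      (fun m ζ hζ => (hgd m ζ).hasFDerivAt) hfg (mem_ball_self hδpos)
    exact hHF.differentiableAt.differentiableWithinAt
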